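/- For any positive integer n, there exists K ≥ 0 such that 3^K·n is stable; that is, there exists K such that for every k ≥ K, ‖3^k·n‖ = 3(k − K) + ‖3^K·n‖. -/

import Mathlib

/-- `CanWrite n k` means the positive integer `n` can be written using exactly `k` ones
combined by addition and multiplication. -/
inductive CanWrite : ℕ → ℕ → Prop
  | one : CanWrite 1 1
  | add {a b j k : ℕ} : CanWrite a j → CanWrite b k → CanWrite (a + b) (j + k)
  | mul {a b j k : ℕ} : CanWrite a j → CanWrite b k → CanWrite (a * b) (j + k)

/-- The integer complexity `‖n‖`: the least number of ones needed to write `n`. -/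
noncomputable def cpx (n : ℕ) : ℕ := sInf {k | CanWrite n k}

/-- The defect `δ(n) = ‖n‖ - 3 log₃ n`. -/
noncomputable def defect (n : ℕ) : ℝ := (cpx n : ℝ) - 3 * Real.logb 3 n

/-- `n` is stable if `‖3^k n‖ = 3k + ‖n‖` for all `k ≥ 0`. -/
def Stable (n : ℕ) : Prop := ∀ k : ℕ, cpx (3 ^ k * n) = 3 * k + cpx n

/-- The stabilization length `K(n)`: the least `k` such that `3^k n` is stable. -/
noncomputable def stabLen (n : ℕ) : ℕ := sInf {k | Stable (3 ^ k * n)}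

/-- The stable complexity `‖n‖_st`: equal to `‖3^k n‖ - 3k` for any `k` with `3^k n` stable. -/
noncomputable def stableCpx (n : ℕ) : ℕ :=
  sInf {m | ∃ k : ℕ, Stable (3 ^ k * n) ∧ cpx (3 ^ k * n) = m + 3 * k}

/-- The stable defect `δ_st(n) = ‖n‖_st - 3 log₃ n`. -/
noncomputable def stableDefect (n : ℕ) : ℝ := (stableCpx n : ℝ) - 3 * Real.logb 3 n

lemma CanWrite.pos {a j : ℕ} (h : CanWrite a j) : 1 ≤ a ∧ 1 ≤ j := by
  induction h with
  | one => exact ⟨le_refl 1, le_refl 1⟩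
  | add _ _ ih1 ih2 => omega
  | mul _ _ ih1 ih2 => constructor <;> nlinarith [ih1.1, ih1.2, ih2.1, ih2.2]

lemma one_add_cube {b k : ℕ} (hb1 : 1 ≤ b) (hk : 1 ≤ k) (hb : b ^ 3 ≤ 3 ^ k) :
    (1 + b) ^ 3 ≤ 3 ^ (1 + k) := by
  rcases Nat.lt_or_ge b 3 with h3 | h3
  · interval_cases b
    · calc (1+1)^3 = 8 := by norm_num
        _ ≤ 3 ^ (1+k) := by
          calc (8:ℕ) ≤ 3 ^ 2 := by norm_num
            _ ≤ 3 ^ (1+k) := Nat.pow_le_pow_right (by norm_num) (by omega)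
    · have hk2 : 2 ≤ k := by
        by_contra hc
        interval_cases k <;> omega
      calc (1+2)^3 = 27 := by norm_num
        _ = 3 ^ 3 := by norm_num
        _ ≤ 3 ^ (1+k) := Nat.pow_le_pow_right (by norm_num) (by omega)
  · have e1 : 3 * b ^ 2 ≤ b ^ 3 := by
      have := Nat.mul_le_mul_right (b ^ 2) h3
      calc 3 * b ^ 2 ≤ b * b ^ 2 := this
        _ = b ^ 3 := by ring
    have e2 : 3 * b ≤ b ^ 2 := by
      have := Nat.mul_le_mul_right b h3
      calc 3 * b ≤ b * b := this
        _ = b ^ 2 := by ring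
    have h1 : 27 * (1 + b) ^ 3 ≤ 64 * b ^ 3 := by nlinarith
    have h2 : 27 * (1 + b) ^ 3 ≤ 27 * 3 ^ (1 + k) := by
      calc 27 * (1 + b) ^ 3 ≤ 64 * b ^ 3 := h1
        _ ≤ 64 * 3 ^ k := by nlinarith
        _ ≤ 81 * 3 ^ k := by nlinarith [(Nat.pow_pos (show 0 < 3 by norm_num) : 0 < 3 ^ k)]
        _ = 27 * 3 ^ (1 + k) := by rw [pow_add]; ring
    omega

lemma CanWrite.cube_le {a j : ℕ} (h : CanWrite a j) : a ^ 3 ≤ 3 ^ j := by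
  induction h with
  | one => norm_num
  | @add a b j k h1 h2 ih1 ih2 =>
    obtain ⟨ha1, hj1⟩ := h1.pos
    obtain ⟨hb1, hk1⟩ := h2.pos
    rcases Nat.lt_or_ge a 2 with ha2 | ha2
    · have ha : a = 1 := by omega
      subst ha
      exact (one_add_cube hb1 hk1 ih2).trans
        (Nat.pow_le_pow_right (by norm_num) (by omega))
    · rcases Nat.lt_or_ge b 2 with hb2 | hb2
      · have hb : b = 1 := by omega
        subst hb
        calc (a + 1) ^ 3 = (1 + a) ^ 3 := by ring
          _ ≤ 3 ^ (1 + j) := one_add_cube ha1 hj1 ih1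
          _ ≤ 3 ^ (j + k) := Nat.pow_le_pow_right (by norm_num) (by omega)
      · have hab : a + b ≤ a * b := by nlinarith
        calc (a + b) ^ 3 ≤ (a * b) ^ 3 := Nat.pow_le_pow_left hab 3
          _ = a ^ 3 * b ^ 3 := by ring
          _ ≤ 3 ^ j * 3 ^ k := Nat.mul_le_mul ih1 ih2
          _ = 3 ^ (j + k) := (pow_add 3 j k).symm
  | @mul a b j k h1 h2 ih1 ih2 =>
    calc (a * b) ^ 3 = a ^ 3 * b ^ 3 := by ring
      _ ≤ 3 ^ j * 3 ^ k := Nat.mul_le_mul ih1 ih2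
      _ = 3 ^ (j + k) := (pow_add 3 j k).symm

lemma canWrite_self {n : ℕ} (hn : 0 < n) : CanWrite n n := by
  induction n with
  | zero => omega
  | succ m ih =>
    rcases Nat.eq_zero_or_pos m with hm | hm
    · subst hm; exact CanWrite.one
    · exact CanWrite.add (ih hm) CanWrite.one

lemma cpx_mem {n : ℕ} (hn : 0 < n) : CanWrite n (cpx n) :=
  Nat.sInf_mem ⟨n, canWrite_self hn⟩

lemma cpx_le {n k : ℕ} (h : CanWrite n k) : cpx n ≤ k := Nat.sInf_le h

lemma canWrite_three : CanWrite 3 3 := by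
  have h : CanWrite (1 + 1 + 1) (1 + 1 + 1) :=
    CanWrite.add (CanWrite.add CanWrite.one CanWrite.one) CanWrite.one
  norm_num at h
  exact h

lemma eventually_const (f : ℕ → ℕ) (hstep : ∀ k, f (k + 1) ≤ f k) :
    ∃ K, ∀ k, K ≤ k → f k = f K := by
  have hanti : ∀ k l, k ≤ l → f l ≤ f k := by
    intro k l hkl
    induction l, hkl using Nat.le_induction with
    | base => exact le_rfl
    | succ m hm ih => exact (hstep m).trans ih
  obtain ⟨K, hK⟩ : ∃ K, f K = sInf (Set.range f) := Nat.sInf_mem (Set.range_nonempty f)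
  exact ⟨K, fun k hk =>
    le_antisymm (hanti K k hk) (hK ▸ Nat.sInf_le ⟨k, rfl⟩)⟩

theorem exists_stabilization (n : ℕ) (hn : 0 < n) :
    ∃ K : ℕ, Stable (3 ^ K * n) ∧
      ∀ k : ℕ, K ≤ k → cpx (3 ^ k * n) = 3 * (k - K) + cpx (3 ^ K * n) := by
  have hg_lb : ∀ k, 3 * k ≤ cpx (3 ^ k * n) := by
    intro k
    have hpos : 0 < 3 ^ k * n := by positivity
    have hc := (cpx_mem hpos).cube_le
    have h1 : (3 : ℕ) ^ (3 * k) ≤ 3 ^ (cpx (3 ^ k * n)) := by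
      calc (3:ℕ) ^ (3 * k) = (3 ^ k) ^ 3 := by rw [← pow_mul, mul_comm]
        _ ≤ (3 ^ k * n) ^ 3 :=
          Nat.pow_le_pow_left (Nat.le_mul_of_pos_right _ hn) 3
        _ ≤ 3 ^ (cpx (3 ^ k * n)) := hc
    exact (Nat.pow_le_pow_iff_right (by norm_num : 1 < 3)).mp h1
  have hg_step : ∀ k, cpx (3 ^ (k + 1) * n) ≤ cpx (3 ^ k * n) + 3 := by
    intro k
    have hpos : 0 < 3 ^ k * n := by positivity
    have h1 : CanWrite (3 * (3 ^ k * n)) (3 + cpx (3 ^ k * n)) :=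
      CanWrite.mul canWrite_three (cpx_mem hpos)
    have h2 : 3 ^ (k + 1) * n = 3 * (3 ^ k * n) := by ring
    have h3 := cpx_le h1
    rw [h2]
    omega
  obtain ⟨K, hK⟩ := eventually_const (fun k => cpx (3 ^ k * n) - 3 * k)
    (fun k => by
      have := hg_step k
      have := hg_lb k
      have := hg_lb (k + 1)
      omega)
  have key : ∀ k, K ≤ k → cpx (3 ^ k * n) = 3 * (k - K) + cpx (3 ^ K * n) := by
    intro k hk
    have h1 := hK k hk
    have h2 := hg_lb k
    have h3 := hg_lb K
    omega
  refine ⟨K, ?_, key⟩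
  intro j
  have h1 : 3 ^ j * (3 ^ K * n) = 3 ^ (j + K) * n := by
    rw [← mul_assoc, ← pow_add]
  rw [h1, key (j + K) (by omega)]
  omega
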